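/- Let P be a lattice with a compatible abelian group structure, let R be a principal ideal domain, and let O ⊆ P. Suppose there exists a ∈ O such that no element of V_a ∩ O is a minimal element of O, where V_a = {x ∈ P : x ≤ a}. Let M be a P-graded R[U₀]-module such that M_i is a nonzero finitely generated free R-module for every i ∈ O and M_i = 0 for every i ∉ O. Then M is not graded projective. -/

import Mathlib

open scoped DirectSum

variable (P : Type) [AddCommGroup P] [Lattice P]
  [CovariantClass P P (· + ·) (· ≤ ·)] [DecidableEq P]
variable (R : Type) [CommRing R]

/-- The monoid algebra `R[U₀]` on the submonoid `U₀` of nonnegative elements of `P`. -/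
abbrev PersAlg : Type := AddMonoidAlgebra R ↥(AddSubmonoid.nonneg P)

/-- The monomial `t^p ∈ R[U₀]` for `p ≥ 0` (and `0` otherwise, a junk value). -/
noncomputable def tp (p : P) : PersAlg P R :=
  letI := Classical.dec (0 ≤ p)
  if h : 0 ≤ p then AddMonoidAlgebra.single (⟨p, h⟩ : ↥(AddSubmonoid.nonneg P)) 1 else 0

/-- A `P`-graded `R[U₀]`-module (persistence module): an `R[U₀]`-module together with an
internal direct sum decomposition `M = ⊕_{a ∈ P} M_a` into `R`-submodules such that
`t^s • M_a ⊆ M_{a+s}` for all `s ≥ 0`. -/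
structure PersMod : Type 1 where
  carrier : Type
  [isAddCommGroup : AddCommGroup carrier]
  [isModuleR : Module R carrier]
  [isModule : Module (PersAlg P R) carrier]
  [isTower : IsScalarTower R (PersAlg P R) carrier]
  deg : P → Submodule R carrier
  isInternal : DirectSum.IsInternal deg
  tp_smul_mem : ∀ (s : P), 0 ≤ s → ∀ (a : P) (x : carrier),
    x ∈ deg a → tp P R s • x ∈ deg (a + s)

attribute [instance] PersMod.isAddCommGroup PersMod.isModuleR PersMod.isModule PersMod.isTower

/-- Scalar multiplication by a fixed element of `R[U₀]`, as an `R`-linear map. -/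
noncomputable def smulMapR (M : PersMod P R) (a : PersAlg P R) : M.carrier →ₗ[R] M.carrier :=
  (LinearMap.lsmul (PersAlg P R) M.carrier a).restrictScalars R

/-- `D_r ⊆ M_r`, the sum of the images of all `M_q`, `q < r`, under `t^{r-q}`. -/
noncomputable def Dsub (M : PersMod P R) (r : P) : Submodule R M.carrier :=
  ⨆ q : {q : P // q < r}, Submodule.map (smulMapR P R M (tp P R (r - q.1))) (M.deg q.1)

/-- `M` is graded free: it admits an `R[U₀]`-basis of homogeneous elements. -/
def IsGradedFree (M : PersMod P R) : Prop :=
  ∃ (Λ : Type) (d : Λ → P) (b : Module.Basis Λ (PersAlg P R) M.carrier),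
    ∀ η, b η ∈ M.deg (d η)

/-- `M` is graded projective: it is a graded direct summand of a graded free module. -/
def IsGradedProjective (M : PersMod P R) : Prop :=
  ∃ F : PersMod P R, IsGradedFree P R F ∧
    ∃ (ι : M.carrier →ₗ[PersAlg P R] F.carrier) (π : F.carrier →ₗ[PersAlg P R] M.carrier),
      (∀ (a : P), ∀ x ∈ M.deg a, ι x ∈ F.deg a) ∧
      (∀ (a : P), ∀ x ∈ F.deg a, π x ∈ M.deg a) ∧
      π.comp ι = LinearMap.id

/-- An `R[U₀]`-submodule `S` of a graded module `F` is graded if it is the sum of its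
homogeneous parts `S ∩ F_a`. -/
def IsGradedSubmodule (F : PersMod P R) (S : Submodule (PersAlg P R) F.carrier) : Prop :=
  S.restrictScalars R = ⨆ a : P, (S.restrictScalars R ⊓ F.deg a)

/-- For a graded submodule `S ⊆ F`, the submodule `D_r` of sums of images of the homogeneous
pieces `S ∩ F_q`, `q < r`, under `t^{r-q}`. -/
noncomputable def DsubOf (F : PersMod P R) (S : Submodule (PersAlg P R) F.carrier) (r : P) :
    Submodule R F.carrier :=
  ⨆ q : {q : P // q < r},
    Submodule.map (smulMapR P R F (tp P R (r - q.1))) (S.restrictScalars R ⊓ F.deg q.1)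

/-- `t^u` as an actual single, for `u` in the nonneg submonoid. -/
lemma tp_coe (u : ↥(AddSubmonoid.nonneg P)) :
    tp P R (↑u : P) = AddMonoidAlgebra.single u 1 := by
  unfold tp
  rw [dif_pos (show (0:P) ≤ (u:P) from u.2)]

/-- Multiplication by `t^s` is injective on `R[U₀]`. -/
lemma tp_mul_ne_zero (s : P) (hs : 0 ≤ s) (c : PersAlg P R) (hc : c ≠ 0) :
    tp P R s * c ≠ 0 := by
  obtain ⟨u, hu⟩ := Finsupp.support_nonempty_iff.mpr (AddMonoidAlgebra.coeff_eq_zero.not.mpr hc)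
  intro h0
  have H : ∀ v : ↥(AddSubmonoid.nonneg P),
      (⟨s, hs⟩ : ↥(AddSubmonoid.nonneg P)) + v = ⟨s, hs⟩ + u ↔ v = u := by
    intro v
    constructor
    · intro h
      have h' : s + (v : P) = s + (u : P) := congrArg Subtype.val h
      exact Subtype.ext (add_left_cancel h')
    · rintro rfl; rfl
  have key := AddMonoidAlgebra.coeff_single_mul_eq_mul_coeff (x := c) (r := (1 : R))
    (m := (⟨s, hs⟩ : ↥(AddSubmonoid.nonneg P))) (m₁ := ⟨s, hs⟩ + u) u (fun v _ => H v)
  rw [show tp P R s = AddMonoidAlgebra.single (⟨s, hs⟩ : ↥(AddSubmonoid.nonneg P)) 1 by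
        unfold tp; rw [dif_pos hs]] at h0
  rw [h0, one_mul, AddMonoidAlgebra.coeff_zero, Finsupp.coe_zero, Pi.zero_apply] at key
  exact Finsupp.mem_support_iff.mp hu key.symm

/-- Coordinates (w.r.t. a homogeneous basis of `F`) of homogeneous elements of `M` of degree
`q ≤ a` only involve basis indices already appearing in the coordinates of a finite
generating set of `M_a`. -/
lemma coeff_mem (M F : PersMod P R) {Λ : Type}
    (b : Module.Basis Λ (PersAlg P R) F.carrier)
    (ι : M.carrier →ₗ[PersAlg P R] F.carrier)
    (a : P) (T : Finset M.carrier)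
    (hT : Submodule.span R (↑T : Set M.carrier) = M.deg a)
    (q : P) (hq : q ≤ a) (x : M.carrier) (hx : x ∈ M.deg q)
    (η : Λ) (hη : b.repr (ι x) η ≠ 0) :
    ∃ t ∈ T, η ∈ (b.repr (ι t)).support := by
  have hs : (0 : P) ≤ a - q := sub_nonneg.mpr hq
  have hz : tp P R (a - q) • x ∈ M.deg a := by
    have h := M.tp_smul_mem (a - q) hs q x hx
    rwa [show q + (a - q) = a by abel] at h
  rw [← hT, Submodule.mem_span_finset] at hz
  obtain ⟨f, -, hf⟩ := hz
  by_contra hcon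
  push_neg at hcon
  -- the R-linear coordinate functional
  set Φ : M.carrier →ₗ[R] PersAlg P R :=
    (Finsupp.lapply η).comp
      (((b.repr.restrictScalars R).toLinearMap).comp (ι.restrictScalars R)) with hΦ
  have hΦval : ∀ z : M.carrier, Φ z = b.repr (ι z) η := fun z => rfl
  have h1 : Φ (tp P R (a - q) • x) = tp P R (a - q) * (b.repr (ι x) η) := by
    rw [hΦval, ι.map_smul, map_smul, Finsupp.smul_apply, smul_eq_mul]
  have h2 : Φ (tp P R (a - q) • x) = 0 := by
    rw [← hf, map_sum]
    refine Finset.sum_eq_zero fun t ht => ?_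
    rw [map_smul, hΦval, Finsupp.notMem_support_iff.mp (hcon t ht), smul_zero]
  rw [h1] at h2
  exact tp_mul_ne_zero P R (a - q) hs _ hη h2

/-- If `x ∈ M_q` is nonzero with `q ≤ a`, then some basis index `η` appearing in the
coordinates of the generators of `M_a` has `d η ≤ q` and `π (b η) ≠ 0`. -/
lemma exists_generator_below (M F : PersMod P R) {Λ : Type} (d : Λ → P)
    (b : Module.Basis Λ (PersAlg P R) F.carrier) (hb : ∀ η, b η ∈ F.deg (d η))
    (ι : M.carrier →ₗ[PersAlg P R] F.carrier)
    (π : F.carrier →ₗ[PersAlg P R] M.carrier)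
    (hπ : ∀ (p : P), ∀ x ∈ F.deg p, π x ∈ M.deg p)
    (hπι : π.comp ι = LinearMap.id)
    (a : P) (T : Finset M.carrier)
    (hT : Submodule.span R (↑T : Set M.carrier) = M.deg a)
    (q : P) (hq : q ≤ a) (x : M.carrier) (hx : x ∈ M.deg q) (hx0 : x ≠ 0) :
    ∃ η, (∃ t ∈ T, η ∈ (b.repr (ι t)).support) ∧ d η ≤ q ∧ π (b η) ≠ 0 := by
  by_contra hcon
  push_neg at hcon
  set K : Submodule R M.carrier := ⨆ j, ⨆ (_ : j ≠ q), M.deg j with hK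
  have hπιx : π (ι x) = x := by
    have h := LinearMap.congr_fun hπι x
    simpa using h
  have hxeq : x = (b.repr (ι x)).sum fun η c => c • π (b η) := by
    have h1 : Finsupp.linearCombination (PersAlg P R) b (b.repr (ι x)) = ι x :=
      b.linearCombination_repr (ι x)
    rw [Finsupp.linearCombination_apply] at h1
    calc x = π (ι x) := hπιx.symm
      _ = π ((b.repr (ι x)).sum fun η c => c • b η) := by rw [h1]
      _ = (b.repr (ι x)).sum fun η c => c • π (b η) := by
          rw [map_finsuppSum]
          exact Finsupp.sum_congr fun η _ => map_smul π _ _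
  have hxK : x ∈ K := by
    rw [hxeq]
    apply Submodule.finsuppSum_mem
    intro η hηne
    by_cases hπη : π (b η) = 0
    · rw [hπη, smul_zero]; exact zero_mem _
    have hηJ : ∃ t ∈ T, η ∈ (b.repr (ι t)).support :=
      coeff_mem P R M F b ι a T hT q hq x hx η hηne
    have hdq : ¬ d η ≤ q := fun hle => hπη (hcon η hηJ hle)
    set c : PersAlg P R := b.repr (ι x) η with hc
    have hcy : c • π (b η)
        = ∑ u ∈ c.coeff.support, AddMonoidAlgebra.single u (c.coeff u) • π (b η) := by
      conv_lhs => rw [← AddMonoidAlgebra.sum_coeff_single c]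
      rw [Finsupp.sum, Finset.sum_smul]
    rw [hcy]
    apply Submodule.sum_mem
    intro u _
    have h1 : tp P R (↑u : P) • π (b η) ∈ M.deg (d η + ↑u) :=
      M.tp_smul_mem (↑u : P) u.2 (d η) (π (b η)) (hπ (d η) (b η) (hb η))
    have h2 : AddMonoidAlgebra.single u (c.coeff u) • π (b η)
        = (c.coeff u) • (tp P R (↑u : P) • π (b η)) := by
      rw [tp_coe, ← smul_assoc, AddMonoidAlgebra.smul_single', mul_one]
    have hmem : AddMonoidAlgebra.single u (c.coeff u) • π (b η) ∈ M.deg (d η + ↑u) := by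
      rw [h2]; exact Submodule.smul_mem _ _ h1
    have hne : d η + (↑u : P) ≠ q := fun he => hdq (he ▸ le_add_of_nonneg_right u.2)
    exact (le_iSup_of_le (d η + (↑u : P)) (le_iSup_of_le hne le_rfl) :
      M.deg (d η + (↑u : P)) ≤ K) hmem
  have hdisj := (M.isInternal).submodule_iSupIndep q
  exact hx0 (Submodule.disjoint_def.mp hdisj x hx hxK)

theorem not_graded_projective [IsDomain R] [IsPrincipalIdealRing R]
    (O : Set P) (a : P) (ha : a ∈ O)
    (hnomin : ∀ x ∈ O, x ≤ a → ∃ y ∈ O, y < x)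
    (M : PersMod P R)
    (hO : ∀ i ∈ O, M.deg i ≠ ⊥ ∧ (M.deg i).FG ∧ Module.Free R ↥(M.deg i))
    (hnotO : ∀ i, i ∉ O → M.deg i = ⊥) :
    ¬ IsGradedProjective P R M := by
  rintro ⟨F, ⟨Λ, d, b, hb⟩, ι, π, hι, hπ, hπι⟩
  classical
  obtain ⟨hMa_ne, hMa_fg, -⟩ := hO a ha
  obtain ⟨T, hT⟩ := hMa_fg
  -- the finite set of relevant basis indices
  set J : Finset Λ := T.biUnion (fun t => (b.repr (ι t)).support) with hJ
  have hJ_iff : ∀ η : Λ, η ∈ J ↔ ∃ t ∈ T, η ∈ (b.repr (ι t)).support := by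
    intro η; simp [hJ]
  -- the finite set of relevant degrees
  set S : Finset P := (J.filter (fun η => d η ≤ a ∧ π (b η) ≠ 0)).image d with hS
  have hS_mem : ∀ η : Λ, η ∈ J → d η ≤ a → π (b η) ≠ 0 → d η ∈ S := by
    intro η h1 h2 h3
    exact Finset.mem_image_of_mem d (Finset.mem_filter.mpr ⟨h1, h2, h3⟩)
  -- S is nonempty
  obtain ⟨x0, hx0mem, hx00⟩ := (Submodule.ne_bot_iff _).mp hMa_ne
  obtain ⟨η0, hη0J, hη0d, hη0π⟩ :=
    exists_generator_below P R M F d b hb ι π hπ hπι a T hT a le_rfl x0 hx0mem hx00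
  have hSne : S.Nonempty := ⟨d η0, hS_mem η0 ((hJ_iff η0).mpr hη0J) hη0d hη0π⟩
  -- take a minimal degree in S
  obtain ⟨m, hmS, hmin⟩ := S.exists_minimal hSne
  obtain ⟨η1, hη1, hη1m⟩ := Finset.mem_image.mp hmS
  obtain ⟨hη1J, hη1a', hη1π'⟩ := Finset.mem_filter.mp hη1
  -- the minimal degree lies in O
  have hmO : m ∈ O := by
    by_contra hmo
    have hbot : M.deg m = ⊥ := hnotO m hmo
    have : π (b η1) ∈ M.deg (d η1) := hπ (d η1) (b η1) (hb η1)
    rw [hη1m, hbot] at this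
    exact hη1π' (Submodule.mem_bot R |>.mp this)
  have hma : m ≤ a := hη1m ▸ hη1a'
  -- get something strictly below in O
  obtain ⟨y, hyO, hym⟩ := hnomin m hmO hma
  have hya : y ≤ a := le_of_lt (lt_of_lt_of_le hym hma)
  obtain ⟨x1, hx1mem, hx10⟩ := (Submodule.ne_bot_iff _).mp (hO y hyO).1
  obtain ⟨η2, hη2J, hη2d, hη2π⟩ :=
    exists_generator_below P R M F d b hb ι π hπ hπι a T hT y hya x1 hx1mem hx10
  have hη2S : d η2 ∈ S :=
    hS_mem η2 ((hJ_iff η2).mpr hη2J) (le_trans hη2d hya) hη2π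
  exact (lt_of_le_of_lt hη2d hym).not_ge (hmin hη2S (lt_of_le_of_lt hη2d hym).le)
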